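/- Suppose y, x, d ≥ 0 and a > 0 satisfy y ≤ x + d ρ^{1/2} y^{2p+1} with ρ = a²/(d² x^{4p} 2^{4p}) and x > 0, where p ≥ 1 is an integer. Then the quantity h = y/(2x) satisfies h(1 − a h^{2p}) ≤ 1/2; consequently, for a > 0 chosen sufficiently small (depending only on p) there exist constants m′ and M′ with 1/2 < m′ < 1 < M′ such that either h ≤ m′ or h ≥ M′. In particular, if in addition y depends continuously on a parameter T ≥ 1 and h ≤ m′ at T = 1, then h ≤ m′ for all T ≥ 1 and hence y(T) ≤ 2x(T) for all T ≥ 1. -/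

import Mathlib

noncomputable section

private lemma key_ineq (p : ℕ) (a x y d : ℝ) (ha : 0 < a) (hx : 0 < x) (hy : 0 ≤ y)
    (hd : 0 ≤ d)
    (hineq : y ≤ x + d * (a ^ 2 / (d ^ 2 * x ^ (4 * p) * 2 ^ (4 * p))) ^ ((1 : ℝ) / 2) *
        y ^ (2 * p + 1)) :
    (y / (2 * x)) * (1 - a * (y / (2 * x)) ^ (2 * p)) ≤ 1 / 2 := by
  have h2x : (0:ℝ) < 2 * x := by linarith
  have hbase : y - a * y ^ (2*p+1) / (x ^ (2*p) * 2 ^ (2*p)) ≤ x := by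
    rcases eq_or_lt_of_le hd with hd0 | hd0
    · have hyx : y ≤ x := by simpa [← hd0] using hineq
      have hnn : 0 ≤ a * y ^ (2*p+1) / (x ^ (2*p) * 2 ^ (2*p)) := by positivity
      linarith
    · set s := a / (d * x ^ (2*p) * 2 ^ (2*p)) with hs_def
      have hden : 0 < d * x ^ (2*p) * 2 ^ (2*p) := by positivity
      have hs : 0 < s := div_pos ha hden
      have hsq : a ^ 2 / (d ^ 2 * x ^ (4 * p) * 2 ^ (4 * p)) = s ^ 2 := by
        rw [hs_def, div_pow, mul_pow, mul_pow, ← pow_mul, ← pow_mul,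
          show 2*p*2 = 4*p from by ring]
      have hrt : (a ^ 2 / (d ^ 2 * x ^ (4 * p) * 2 ^ (4 * p))) ^ ((1:ℝ)/2) = s := by
        rw [hsq, ← Real.rpow_natCast s 2, ← Real.rpow_mul hs.le]
        norm_num
      rw [hrt] at hineq
      have hds : d * s = a / (x ^ (2*p) * 2 ^ (2*p)) := by
        rw [hs_def]; field_simp
      have h1 : d * s * y ^ (2*p+1) = a * y ^ (2*p+1) / (x ^ (2*p) * 2 ^ (2*p)) := by
        rw [hds]; ring
      rw [h1] at hineq
      linarith
  have heq : (y / (2 * x)) * (1 - a * (y / (2 * x)) ^ (2 * p))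
      = (y - a * y ^ (2*p+1) / (x ^ (2*p) * 2 ^ (2*p))) / (2 * x) := by
    rw [pow_succ]
    have hx2p : x ^ (2*p) ≠ 0 := by positivity
    have h22p : (2:ℝ) ^ (2*p) ≠ 0 := by positivity
    rw [div_pow, mul_pow]
    field_simp
  rw [heq, div_le_iff₀ h2x]
  linarith

private lemma dichot (p : ℕ) (a h : ℝ) (ha : 0 < a) (ha0 : a ≤ 1 / (8 * 2 ^ (2*p)))
    (hh : 0 ≤ h) (hf : h * (1 - a * h ^ (2*p)) ≤ 1/2) :
    h ≤ 3/4 ∨ 2 ≤ h := by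
  by_contra hc
  push_neg at hc
  obtain ⟨h1, h2⟩ := hc
  have hp2 : h ^ (2*p) ≤ 2 ^ (2*p) := pow_le_pow_left₀ hh h2.le _
  have h2p : (0:ℝ) < 2 ^ (2*p) := by positivity
  have hA : a * h ^ (2*p) ≤ 1/8 := by
    have := mul_le_mul ha0 hp2 (by positivity) (by positivity)
    calc a * h ^ (2*p) ≤ 1 / (8 * 2 ^ (2*p)) * 2 ^ (2*p) := this
      _ = 1/8 := by field_simp
  have hAnn : 0 ≤ a * h ^ (2*p) := by positivity
  nlinarith

theorem bootstrap_argument (p : ℕ) (hp : 1 ≤ p) :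
    (∀ a x y d : ℝ, 0 < a → 0 < x → 0 ≤ y → 0 ≤ d →
        y ≤ x + d * (a ^ 2 / (d ^ 2 * x ^ (4 * p) * 2 ^ (4 * p))) ^ ((1 : ℝ) / 2) *
              y ^ (2 * p + 1) →
        (y / (2 * x)) * (1 - a * (y / (2 * x)) ^ (2 * p)) ≤ 1 / 2) ∧
    ∃ a₀ > (0 : ℝ), ∀ a : ℝ, 0 < a → a ≤ a₀ →
      ∃ m' M' : ℝ, 1 / 2 < m' ∧ m' < 1 ∧ 1 < M' ∧
        (∀ x y d : ℝ, 0 < x → 0 ≤ y → 0 ≤ d →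
            y ≤ x + d * (a ^ 2 / (d ^ 2 * x ^ (4 * p) * 2 ^ (4 * p))) ^ ((1 : ℝ) / 2) *
                  y ^ (2 * p + 1) →
            y / (2 * x) ≤ m' ∨ M' ≤ y / (2 * x)) ∧
        (∀ x y d : ℝ → ℝ,
            ContinuousOn x (Set.Ici (1 : ℝ)) → ContinuousOn y (Set.Ici (1 : ℝ)) →
            (∀ T ≥ (1 : ℝ), 0 < x T ∧ 0 ≤ y T ∧ 0 ≤ d T ∧
                y T ≤ x T + d T *
                    (a ^ 2 / ((d T) ^ 2 * (x T) ^ (4 * p) * 2 ^ (4 * p))) ^ ((1 : ℝ) / 2) *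
                      (y T) ^ (2 * p + 1)) →
            y 1 / (2 * x 1) ≤ m' →
            ∀ T ≥ (1 : ℝ), y T / (2 * x T) ≤ m' ∧ y T ≤ 2 * x T) := by
  constructor
  · exact fun a x y d ha hx hy hd hineq => key_ineq p a x y d ha hx hy hd hineq
  · refine ⟨1 / (8 * 2 ^ (2*p)), by positivity, fun a ha ha0 => ⟨3/4, 2, by norm_num,
      by norm_num, by norm_num, ?_, ?_⟩⟩
    · intro x y d hx hy hd hineq
      exact dichot p a _ ha ha0 (by positivity)
        (key_ineq p a x y d ha hx hy hd hineq)
    · intro x y d hcx hcy hT hinit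
      set g : ℝ → ℝ := fun T => y T / (2 * x T) with hg_def
      have hgc : ContinuousOn g (Set.Ici (1:ℝ)) := by
        apply hcy.div (continuousOn_const.mul hcx)
        intro T hT'
        have := (hT T hT').1
        exact mul_ne_zero two_ne_zero this.ne'
      have hdich : ∀ T ≥ (1:ℝ), g T ≤ 3/4 ∨ 2 ≤ g T := by
        intro T hT'
        obtain ⟨hx, hy, hd, hineq⟩ := hT T hT'
        exact dichot p a _ ha ha0 (by positivity)
          (key_ineq p a _ _ _ ha hx hy hd hineq)
      have hsmall : ∀ T ≥ (1:ℝ), g T ≤ 3/4 := by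
        intro T hT'
        rcases hdich T hT' with h | h
        · exact h
        · exfalso
          have hsub : Set.Icc (1:ℝ) T ⊆ Set.Ici 1 := Set.Icc_subset_Ici_self
          have hivt := intermediate_value_Icc hT' (hgc.mono hsub)
          have h1mem : (1:ℝ) ∈ Set.Icc (g 1) (g T) := by
            constructor
            · linarith [hinit]
            · linarith
          obtain ⟨c, hc, hgc1⟩ := hivt h1mem
          rcases hdich c hc.1 with h' | h' <;> rw [hgc1] at h' <;> linarith
      intro T hT'
      have h1 := hsmall T hT'
      have hxT := (hT T hT').1
      refine ⟨h1, ?_⟩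
      have : y T / (2 * x T) ≤ 1 := by linarith
      calc y T = (y T / (2 * x T)) * (2 * x T) := by field_simp
        _ ≤ 1 * (2 * x T) := by
            apply mul_le_mul_of_nonneg_right this (by positivity)
        _ = 2 * x T := by ring
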